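/- Let n ∈ ℕ, N = 2^n, and let (A, α) be an admissible digit datum on n bits with associated function f. Let q₁ > 1 be an odd integer, χ a primitive Dirichlet character modulo q₁, q₀ ≥ 1 an integer with gcd(q₀, q₁) = 1, and b ∈ ℤ. Then |Σ_{0 ≤ k < N, q₀ | (k+b)} f(k) χ(k+b)| ≤ (N / (q₀ √{q₁})) · Σ_{a₀=0}^{q₀−1} Σ_{1 ≤ a₁ ≤ q₁, gcd(a₁,q₁)=1} |\hat f(a₀/q₀ + a₁/q₁)|. -/

import Mathlib

open Finset
open scoped Classical

/-- The indicator function of integers `x < 2^n` whose binary digit at position `j`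
equals `α j` for every `j ∈ A`. -/
def digitIndicator (A : Finset ℕ) (α : ℕ → ℕ) (x : ℕ) : ℕ :=
  if ∀ j ∈ A, x / 2 ^ j % 2 = α j then 1 else 0

/-- The normalized Fourier transform `\hat f(λ) = 2^{-n} ∑_{x < 2^n} f(x) e^{2πiλx}`. -/
noncomputable def fhat (n : ℕ) (A : Finset ℕ) (α : ℕ → ℕ) (lam : ℝ) : ℂ :=
  (2 ^ n : ℂ)⁻¹ * ∑ x ∈ Finset.range (2 ^ n),
    (digitIndicator A α x : ℂ) * Complex.exp (2 * Real.pi * Complex.I * lam * x)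

section AuxLemmas

open DirichletCharacter AddChar




noncomputable def Efn (t : ℝ) : ℂ := Complex.exp (2 * Real.pi * Complex.I * t)

lemma Efn_add (s t : ℝ) : Efn (s + t) = Efn s * Efn t := by
  rw [Efn, Efn, Efn, ← Complex.exp_add]; push_cast; ring_nf

lemma Efn_int (m : ℤ) : Efn m = 1 := by
  rw [Efn]
  have := Complex.exp_int_mul_two_pi_mul_I m
  rw [← this]; congr 1; push_cast; ring

lemma Efn_pow (a : ℕ) (t : ℝ) : Efn t ^ a = Efn (a * t) := by
  rw [Efn, Efn, ← Complex.exp_nat_mul]; congr 1; push_cast; ring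

lemma abs_Efn (t : ℝ) : ‖Efn t‖ = 1 := by
  rw [Efn]
  have : (2 * (Real.pi:ℂ) * Complex.I * t) = (2 * Real.pi * t : ℝ) * Complex.I := by
    push_cast; ring
  rw [this, Complex.norm_exp_ofReal_mul_I]

lemma delta_sum (q : ℕ) (hq : 0 < q) (m : ℤ) :
    ∑ a ∈ Finset.range q, Efn (a * m / q) = if (q : ℤ) ∣ m then (q : ℂ) else 0 := by
  have hq' : (q : ℝ) ≠ 0 := by positivity
  have hterm : ∀ a : ℕ, Efn (a * m / q) = Efn ((m : ℝ) / q) ^ a := by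
    intro a; rw [Efn_pow]; congr 1; ring
  rw [Finset.sum_congr rfl fun a _ => hterm a]
  by_cases hdvd : (q : ℤ) ∣ m
  · obtain ⟨c, rfl⟩ := hdvd
    have h1 : ((q * c : ℤ) : ℝ) / q = (c : ℝ) := by push_cast; field_simp
    rw [if_pos (dvd_mul_right (q:ℤ) c)]
    have h2 : (q : ℝ) * (c : ℝ) / q = (c : ℝ) := by field_simp
    simp [h1, h2, Efn_int c]
  · rw [if_neg hdvd]
    have hne : Efn ((m : ℝ) / q) ≠ 1 := by
      intro h
      rw [Efn, Complex.exp_eq_one_iff] at h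
      obtain ⟨k, hk⟩ := h
      have h2 : (2 * (Real.pi:ℂ) * Complex.I) ≠ 0 := by
        simp [Real.pi_ne_zero, Complex.I_ne_zero]
      push_cast at hk
      have hc : ((m : ℂ) / q) = (k : ℂ) := by
        apply mul_left_cancel₀ h2
        rw [hk]; ring
      have hr : (m : ℝ) / q = (k : ℝ) := by exact_mod_cast hc
      apply hdvd
      refine ⟨k, ?_⟩
      have hm : (m : ℝ) = (q : ℝ) * k := by
        field_simp at hr; linarith [hr]
      exact_mod_cast hm
    rw [geom_sum_eq hne]
    have : Efn ((m : ℝ) / q) ^ q = 1 := by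
      rw [Efn_pow]
      have : (q : ℝ) * ((m : ℝ) / q) = (m : ℝ) := by field_simp
      rw [this]; exact Efn_int m
    rw [this, sub_self, zero_div]


lemma abs_stdAddChar {q : ℕ} [NeZero q] (j : ZMod q) :
    ‖(ZMod.stdAddChar j : ℂ)‖ = 1 := by
  rw [ZMod.stdAddChar_apply, Circle.norm_coe]

lemma conj_stdAddChar {q : ℕ} [NeZero q] (j : ZMod q) :
    (starRingEnd ℂ) (ZMod.stdAddChar j) = ZMod.stdAddChar (-j) := by
  rw [AddChar.map_neg_eq_inv]
  exact (Complex.inv_eq_conj (by rw [abs_stdAddChar])).symm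

lemma mul_inv_char_unit {q : ℕ} (ψ : DirichletCharacter ℂ q) {x : ZMod q} (hx : IsUnit x) :
    ψ x * ψ⁻¹ x = 1 := by
  rw [MulChar.inv_apply_eq_inv]
  exact Ring.mul_inverse_cancel _ (hx.map ψ)

lemma mul_inv_char_nonunit {q : ℕ} (ψ : DirichletCharacter ℂ q) {x : ZMod q} (hx : ¬ IsUnit x) :
    ψ x * ψ⁻¹ x = 0 := by
  rw [MulChar.map_nonunit _ hx, zero_mul]

lemma conj_char_apply {q : ℕ} (ψ : DirichletCharacter ℂ q) (x : ZMod q) :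
    (starRingEnd ℂ) (ψ x) = ψ⁻¹ x :=
  MulChar.star_apply' ψ x

lemma sum_mul_inv_char_ne_zero (q : ℕ) [NeZero q] (ψ : DirichletCharacter ℂ q) :
    (∑ x : ZMod q, ψ x * ψ⁻¹ x) ≠ 0 := by
  have h1 : (∑ x : ZMod q, ψ x * ψ⁻¹ x) =
      ∑ x ∈ Finset.univ.filter (fun x : ZMod q => IsUnit x), ψ x * ψ⁻¹ x := by
    refine (Finset.sum_filter_of_ne fun x _ h => ?_).symm
    by_contra hu
    exact h (mul_inv_char_nonunit ψ hu)
  have h2 : (∑ x ∈ Finset.univ.filter (fun x : ZMod q => IsUnit x), ψ x * ψ⁻¹ x) =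
      ((Finset.univ.filter (fun x : ZMod q => IsUnit x)).card : ℂ) := by
    rw [Finset.sum_congr rfl fun x hx => mul_inv_char_unit ψ (Finset.mem_filter.mp hx).2]
    simp
  rw [h1, h2, Nat.cast_ne_zero]
  exact (Finset.card_pos.mpr ⟨1, Finset.mem_filter.mpr ⟨Finset.mem_univ _, isUnit_one⟩⟩).ne'

lemma gaussSum_conj_mul {q : ℕ} [NeZero q] (ψ : DirichletCharacter ℂ q)
    (hψ : ψ.IsPrimitive) :
    gaussSum ψ ZMod.stdAddChar * (starRingEnd ℂ) (gaussSum ψ ZMod.stdAddChar) = q := by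
  set τ : ℂ := gaussSum ψ ZMod.stdAddChar with hτ
  have hA : ∀ m : ZMod q, (∑ x : ZMod q, ψ x * ZMod.stdAddChar (m * x)) = ψ⁻¹ m * τ := by
    intro m
    have h := gaussSum_mulShift_of_isPrimitive ZMod.stdAddChar hψ m
    rw [gaussSum] at h
    simp only [AddChar.mulShift_apply] at h
    exact h
  set U : ℂ := ∑ x : ZMod q, ψ x * ψ⁻¹ x with hU
  have hUne : U ≠ 0 := sum_mul_inv_char_ne_zero q ψ
  have hAc : ∀ m : ZMod q, (∑ y : ZMod q, ψ⁻¹ y * ZMod.stdAddChar (-(m * y))) =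
      ψ m * (starRingEnd ℂ) τ := by
    intro m
    have h := congrArg (starRingEnd ℂ) (hA m)
    rw [map_sum, map_mul] at h
    simp only [map_mul, conj_char_apply, conj_stdAddChar, inv_inv] at h
    exact h
  have key : ∑ m : ZMod q, (∑ x : ZMod q, ψ x * ZMod.stdAddChar (m * x)) *
      (∑ y : ZMod q, ψ⁻¹ y * ZMod.stdAddChar (-(m * y))) = U * (τ * (starRingEnd ℂ) τ) := by
    calc ∑ m : ZMod q, (∑ x : ZMod q, ψ x * ZMod.stdAddChar (m * x)) *
        (∑ y : ZMod q, ψ⁻¹ y * ZMod.stdAddChar (-(m * y)))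
        = ∑ m : ZMod q, (ψ⁻¹ m * τ) * (ψ m * (starRingEnd ℂ) τ) :=
          Finset.sum_congr rfl fun m _ => by rw [hA m, hAc m]
      _ = (∑ m : ZMod q, ψ m * ψ⁻¹ m) * (τ * (starRingEnd ℂ) τ) := by
          rw [Finset.sum_mul]
          exact Finset.sum_congr rfl fun m _ => by ring
      _ = U * (τ * (starRingEnd ℂ) τ) := by rw [hU]
  have key2 : ∑ m : ZMod q, (∑ x : ZMod q, ψ x * ZMod.stdAddChar (m * x)) *
      (∑ y : ZMod q, ψ⁻¹ y * ZMod.stdAddChar (-(m * y))) = (q : ℂ) * U := by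
    have step1 : ∀ m : ZMod q, (∑ x : ZMod q, ψ x * ZMod.stdAddChar (m * x)) *
        (∑ y : ZMod q, ψ⁻¹ y * ZMod.stdAddChar (-(m * y))) =
        ∑ x : ZMod q, ∑ y : ZMod q, (ψ x * ψ⁻¹ y) * ZMod.stdAddChar (m * (x - y)) := by
      intro m
      rw [Finset.sum_mul_sum]
      refine Finset.sum_congr rfl fun x _ => Finset.sum_congr rfl fun y _ => ?_
      rw [show m * (x - y) = m * x + -(m * y) by ring, AddChar.map_add_eq_mul]
      ring
    rw [Finset.sum_congr rfl fun m _ => step1 m, Finset.sum_comm]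
    have step2 : ∀ x : ZMod q, ∑ m : ZMod q, ∑ y : ZMod q,
        (ψ x * ψ⁻¹ y) * ZMod.stdAddChar (m * (x - y)) = (q : ℂ) * (ψ x * ψ⁻¹ x) := by
      intro x
      rw [Finset.sum_comm]
      have inner : ∀ y : ZMod q, ∑ m : ZMod q,
          (ψ x * ψ⁻¹ y) * ZMod.stdAddChar (m * (x - y)) =
          (ψ x * ψ⁻¹ y) * (if x - y = 0 then (q : ℂ) else 0) := by
        intro y
        rw [← Finset.mul_sum]
        congr 1
        have h := AddChar.sum_mulShift (x - y) (ZMod.isPrimitive_stdAddChar q)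
        rw [ZMod.card] at h
        rw [h]
        split_ifs <;> simp
      rw [Finset.sum_congr rfl fun y _ => inner y]
      rw [Finset.sum_eq_single x]
      · rw [if_pos (sub_self x)]; ring
      · intro y _ hy
        rw [if_neg (fun h => hy ((sub_eq_zero.mp h).symm)), mul_zero]
      · intro h; exact absurd (Finset.mem_univ x) h
    rw [Finset.sum_congr rfl fun x _ => step2 x, ← Finset.mul_sum, hU]
  have h3 := key.symm.trans key2
  have h4 : U * (τ * (starRingEnd ℂ) τ) = U * (q : ℂ) := by rw [h3]; ring
  exact mul_left_cancel₀ hUne h4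

lemma abs_gaussSum {q : ℕ} [NeZero q] (ψ : DirichletCharacter ℂ q) (hψ : ψ.IsPrimitive) :
    ‖gaussSum ψ ZMod.stdAddChar‖ = Real.sqrt q := by
  have h := gaussSum_conj_mul ψ hψ
  rw [Complex.mul_conj] at h
  have h2 : Complex.normSq (gaussSum ψ ZMod.stdAddChar) = (q : ℝ) := by exact_mod_cast h
  rw [Complex.norm_def, h2]

lemma stdAddChar_int {q : ℕ} [NeZero q] (m : ℤ) :
    ZMod.stdAddChar ((m : ZMod q)) = Efn ((m : ℝ) / q) := by
  rw [ZMod.stdAddChar_coe, Efn]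
  congr 1
  push_cast
  ring

lemma sum_eq_fhat (n : ℕ) (A : Finset ℕ) (α : ℕ → ℕ) (lam : ℝ) :
    ∑ x ∈ Finset.range (2 ^ n), (digitIndicator A α x : ℂ) * Efn (lam * x)
      = (2 ^ n : ℂ) * fhat n A α lam := by
  rw [fhat, ← mul_assoc, mul_inv_cancel₀ (by norm_num : (2 ^ n : ℂ) ≠ 0), one_mul]
  refine Finset.sum_congr rfl fun x _ => ?_
  congr 1
  rw [Efn]
  congr 1
  push_cast
  ring

lemma abs_char_unit {q : ℕ} (ψ : DirichletCharacter ℂ q) {x : ZMod q} (hx : IsUnit x) :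
    ‖ψ x‖ = 1 := by
  have := DirichletCharacter.unit_norm_eq_one ψ hx.unit
  rwa [IsUnit.unit_spec] at this

lemma sum_units_val {q : ℕ} [NeZero q] (hq : 1 < q) (ψ : DirichletCharacter ℂ q) (g : ℕ → ℝ) :
    ∑ x : ZMod q, ‖ψ x‖ * g x.val
      = ∑ a ∈ (Finset.Icc 1 q).filter (fun a : ℕ => Nat.gcd a q = 1), g a := by
  have h1 : ∑ x : ZMod q, ‖ψ x‖ * g x.val
      = ∑ x ∈ Finset.univ.filter (fun x : ZMod q => IsUnit x), ‖ψ x‖ * g x.val := by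
    refine (Finset.sum_filter_of_ne fun x _ h => ?_).symm
    by_contra hu
    rw [MulChar.map_nonunit _ hu] at h
    simp at h
  rw [h1]
  refine Finset.sum_nbij' (fun x : ZMod q => x.val) (fun a : ℕ => (a : ZMod q)) ?_ ?_ ?_ ?_ ?_
  · intro x hx
    have hxu : IsUnit x := (Finset.mem_filter.mp hx).2
    have hx0 : x ≠ 0 := by
      intro h0
      rw [h0, isUnit_zero_iff] at hxu
      haveI := Fact.mk hq
      exact zero_ne_one (α := ZMod q) hxu
    have hval : x.val ≠ 0 := fun h => hx0 (by rwa [← ZMod.val_eq_zero])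
    have hlt : x.val < q := ZMod.val_lt x
    have hval1 : 1 ≤ x.val := Nat.one_le_iff_ne_zero.mpr hval
    refine Finset.mem_filter.mpr ⟨Finset.mem_Icc.mpr ⟨hval1, hlt.le⟩, ?_⟩
    have := ZMod.val_coe_unit_coprime hxu.unit
    rwa [IsUnit.unit_spec] at this
  · intro a ha
    obtain ⟨hIcc, hgcd⟩ := Finset.mem_filter.mp ha
    exact Finset.mem_filter.mpr ⟨Finset.mem_univ _, (ZMod.isUnit_iff_coprime a q).mpr hgcd⟩
  · intro x _
    simp [ZMod.natCast_val, ZMod.cast_id]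
  · intro a ha
    obtain ⟨hIcc, hgcd⟩ := Finset.mem_filter.mp ha
    obtain ⟨h1a, h2a⟩ := Finset.mem_Icc.mp hIcc
    have hne : a ≠ q := by
      intro h; subst h
      rw [Nat.gcd_self] at hgcd; omega
    exact ZMod.val_cast_of_lt (by omega)
  · intro x hx
    rw [abs_char_unit ψ (Finset.mem_filter.mp hx).2, one_mul]


lemma factorsThrough_inv {n : ℕ} {χ : DirichletCharacter ℂ n} {d : ℕ}
    (h : FactorsThrough χ d) : FactorsThrough χ⁻¹ d := by
  obtain ⟨hd, χ₀, hχ₀⟩ := h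
  exact ⟨hd, χ₀⁻¹, by rw [hχ₀, map_inv]⟩

lemma conductorSet_inv {n : ℕ} (χ : DirichletCharacter ℂ n) :
    conductorSet χ⁻¹ = conductorSet χ := by
  ext d
  constructor
  · intro hd
    have := factorsThrough_inv (χ := χ⁻¹) hd
    rwa [inv_inv] at this
  · exact fun hd => factorsThrough_inv hd

lemma isPrimitive_inv {n : ℕ} {χ : DirichletCharacter ℂ n} (h : χ.IsPrimitive) :
    (χ⁻¹).IsPrimitive := by
  have : (χ⁻¹).conductor = χ.conductor := by
    unfold DirichletCharacter.conductor
    rw [conductorSet_inv]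
  rw [DirichletCharacter.isPrimitive_def, this]; exact h

end AuxLemmas

set_option maxHeartbeats 1000000

/-- for an admissible digit datum, odd `q₁ > 1`, a primitive Dirichlet
character `χ (mod q₁)`, `q₀ ≥ 1` with `(q₀, q₁) = 1` and `b ∈ ℤ`,
`|∑_{k < N, q₀ | k+b} f(k) χ(k+b)| ≤ (N/(q₀ √q₁)) ∑_{a₀<q₀} ∑_{1≤a₁≤q₁, (a₁,q₁)=1}
|\hat f(a₀/q₀ + a₁/q₁)|`. -/
theorem character_twisted_digit_sum_bound
    (n : ℕ) (A : Finset ℕ) (α : ℕ → ℕ) (r : ℕ)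
    (hAn : A ⊆ Finset.range n) (h0A : 0 ∈ A) (hα : ∀ j ∈ A, α j ≤ 1) (hα0 : α 0 = 1)
    (hr : A.card = r + 1)
    (q₁ : ℕ) (hq₁ : 1 < q₁) (hq₁odd : Odd q₁)
    (χ : DirichletCharacter ℂ q₁) (hχ : χ.IsPrimitive)
    (q₀ : ℕ) (hq₀ : 1 ≤ q₀) (hcop : Nat.Coprime q₀ q₁) (b : ℤ) :
    ‖(∑ k ∈ (Finset.range (2 ^ n)).filter (fun k : ℕ => (q₀ : ℤ) ∣ (k + b)),
        (digitIndicator A α k : ℂ) * χ ((k + b : ℤ) : ZMod q₁))‖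
      ≤ ((2 ^ n : ℝ) / (q₀ * Real.sqrt q₁)) *
          ∑ a₀ ∈ Finset.range q₀,
            ∑ a₁ ∈ (Finset.Icc 1 q₁).filter (fun a : ℕ => Nat.gcd a q₁ = 1),
              ‖(fhat n A α ((a₀ : ℝ) / q₀ + (a₁ : ℝ) / q₁))‖ := by
  haveI : NeZero q₁ := ⟨by omega⟩
  have hq₀ℝ : (q₀ : ℝ) ≠ 0 := by positivity
  have hq₁ℝ : (q₁ : ℝ) ≠ 0 := by positivity
  have hq₀ℂ : (q₀ : ℂ) ≠ 0 := by exact_mod_cast (by positivity : ((q₀:ℝ)) ≠ 0) -- fix later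
  set ψ : DirichletCharacter ℂ q₁ := χ⁻¹ with hψdef
  have hψ : ψ.IsPrimitive := isPrimitive_inv hχ
  set τ : ℂ := gaussSum ψ ZMod.stdAddChar with hτdef
  have habs : ‖τ‖ = Real.sqrt q₁ := abs_gaussSum ψ hψ
  have hsq : 0 < Real.sqrt q₁ := Real.sqrt_pos.mpr (by positivity)
  have hτne : τ ≠ 0 := by
    intro h
    rw [h, norm_zero] at habs
    exact hsq.ne habs
  -- character inversion formula
  have hchar : ∀ m : ℤ, χ ((m : ZMod q₁)) =
      τ⁻¹ * ∑ x : ZMod q₁, ψ x * Efn (((m * x.val : ℤ) : ℝ) / q₁) := by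
    intro m
    have h := gaussSum_mulShift_of_isPrimitive ZMod.stdAddChar hψ ((m : ZMod q₁))
    rw [gaussSum] at h
    simp only [AddChar.mulShift_apply] at h
    rw [hψdef, inv_inv] at h
    have hterm : ∀ x : ZMod q₁, ψ x * ZMod.stdAddChar ((m : ZMod q₁) * x)
        = ψ x * Efn (((m * x.val : ℤ) : ℝ) / q₁) := by
      intro x
      congr 1
      have harg : ((m : ZMod q₁) * x) = (((m * x.val : ℤ) : ZMod q₁)) := by
        push_cast
        rw [ZMod.natCast_val, ZMod.cast_id]
      rw [harg, stdAddChar_int]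
    rw [Finset.sum_congr rfl fun x _ => hterm x] at h
    rw [← hψdef, ← hτdef] at h
    rw [h]
    field_simp
  -- main algebraic identity
  have main : (∑ k ∈ (Finset.range (2 ^ n)).filter (fun k : ℕ => (q₀ : ℤ) ∣ (k + b)),
        (digitIndicator A α k : ℂ) * χ ((k + b : ℤ) : ZMod q₁))
      = (q₀ : ℂ)⁻¹ * τ⁻¹ * ∑ a₀ ∈ Finset.range q₀, ∑ x : ZMod q₁,
          ψ x * (Efn ((a₀ : ℝ) * b / q₀ + (x.val : ℝ) * b / q₁) *
            ((2 ^ n : ℂ) * fhat n A α ((a₀ : ℝ) / q₀ + (x.val : ℝ) / q₁))) := by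
    calc (∑ k ∈ (Finset.range (2 ^ n)).filter (fun k : ℕ => (q₀ : ℤ) ∣ (k + b)),
          (digitIndicator A α k : ℂ) * χ ((k + b : ℤ) : ZMod q₁))
        = ∑ k ∈ Finset.range (2 ^ n), (if (q₀ : ℤ) ∣ ((k : ℤ) + b) then
            (digitIndicator A α k : ℂ) * χ ((k + b : ℤ) : ZMod q₁) else 0) :=
          Finset.sum_filter _ _
      _ = ∑ k ∈ Finset.range (2 ^ n), (q₀ : ℂ)⁻¹ * ∑ a₀ ∈ Finset.range q₀,
            ((digitIndicator A α k : ℂ) * χ ((k + b : ℤ) : ZMod q₁)) *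
              Efn ((a₀ : ℝ) * (((k : ℤ) + b : ℤ) : ℝ) / (q₀ : ℝ)) := by
          refine Finset.sum_congr rfl fun k _ => ?_
          rw [← Finset.mul_sum, delta_sum q₀ (by omega) ((k : ℤ) + b)]
          split_ifs with h
          · field_simp
          · simp
      _ = (q₀ : ℂ)⁻¹ * ∑ k ∈ Finset.range (2 ^ n), ∑ a₀ ∈ Finset.range q₀,
            ((digitIndicator A α k : ℂ) * χ ((k + b : ℤ) : ZMod q₁)) *
              Efn ((a₀ : ℝ) * (((k : ℤ) + b : ℤ) : ℝ) / (q₀ : ℝ)) := by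
          rw [Finset.mul_sum]
      _ = (q₀ : ℂ)⁻¹ * ∑ k ∈ Finset.range (2 ^ n), ∑ a₀ ∈ Finset.range q₀,
            τ⁻¹ * ∑ x : ZMod q₁,
              ((digitIndicator A α k : ℂ) * ψ x) *
                (Efn ((a₀ : ℝ) * (((k : ℤ) + b : ℤ) : ℝ) / (q₀ : ℝ)) *
                 Efn (((((k : ℤ) + b) * x.val : ℤ) : ℝ) / (q₁ : ℝ))) := by
          congr 1
          refine Finset.sum_congr rfl fun k _ => Finset.sum_congr rfl fun a₀ _ => ?_
          rw [hchar ((k : ℤ) + b)]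
          simp only [Finset.mul_sum, Finset.sum_mul]
          exact Finset.sum_congr rfl fun x _ => by ring
      _ = (q₀ : ℂ)⁻¹ * (τ⁻¹ * ∑ k ∈ Finset.range (2 ^ n), ∑ a₀ ∈ Finset.range q₀,
            ∑ x : ZMod q₁,
              ((digitIndicator A α k : ℂ) * ψ x) *
                (Efn ((a₀ : ℝ) * (((k : ℤ) + b : ℤ) : ℝ) / (q₀ : ℝ)) *
                 Efn (((((k : ℤ) + b) * x.val : ℤ) : ℝ) / (q₁ : ℝ)))) := by
          simp only [← Finset.mul_sum]
      _ = (q₀ : ℂ)⁻¹ * τ⁻¹ * ∑ a₀ ∈ Finset.range q₀, ∑ x : ZMod q₁,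
            ∑ k ∈ Finset.range (2 ^ n),
              ((digitIndicator A α k : ℂ) * ψ x) *
                (Efn ((a₀ : ℝ) * (((k : ℤ) + b : ℤ) : ℝ) / (q₀ : ℝ)) *
                 Efn (((((k : ℤ) + b) * x.val : ℤ) : ℝ) / (q₁ : ℝ))) := by
          rw [← mul_assoc]
          congr 1
          rw [Finset.sum_comm]
          exact Finset.sum_congr rfl fun a₀ _ => Finset.sum_comm
      _ = (q₀ : ℂ)⁻¹ * τ⁻¹ * ∑ a₀ ∈ Finset.range q₀, ∑ x : ZMod q₁,
            ψ x * (Efn ((a₀ : ℝ) * b / q₀ + (x.val : ℝ) * b / q₁) *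
              ((2 ^ n : ℂ) * fhat n A α ((a₀ : ℝ) / q₀ + (x.val : ℝ) / q₁))) := by
          congr 1
          refine Finset.sum_congr rfl fun a₀ _ => Finset.sum_congr rfl fun x _ => ?_
          have hE : ∀ k : ℕ, Efn ((a₀ : ℝ) * (((k : ℤ) + b : ℤ) : ℝ) / (q₀ : ℝ)) *
              Efn (((((k : ℤ) + b) * x.val : ℤ) : ℝ) / (q₁ : ℝ)) =
              Efn ((a₀ : ℝ) * b / q₀ + (x.val : ℝ) * b / q₁) *
                Efn (((a₀ : ℝ) / q₀ + (x.val : ℝ) / q₁) * k) := by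
            intro k
            rw [← Efn_add, ← Efn_add]
            congr 1
            push_cast
            field_simp
            ring
          calc ∑ k ∈ Finset.range (2 ^ n),
                ((digitIndicator A α k : ℂ) * ψ x) *
                  (Efn ((a₀ : ℝ) * (((k : ℤ) + b : ℤ) : ℝ) / (q₀ : ℝ)) *
                   Efn (((((k : ℤ) + b) * x.val : ℤ) : ℝ) / (q₁ : ℝ)))
              = ψ x * (Efn ((a₀ : ℝ) * b / q₀ + (x.val : ℝ) * b / q₁) *
                  ∑ k ∈ Finset.range (2 ^ n), (digitIndicator A α k : ℂ) *
                    Efn (((a₀ : ℝ) / q₀ + (x.val : ℝ) / q₁) * k)) := by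
                rw [Finset.mul_sum, Finset.mul_sum]
                refine Finset.sum_congr rfl fun k _ => ?_
                rw [hE k]
                ring
            _ = ψ x * (Efn ((a₀ : ℝ) * b / q₀ + (x.val : ℝ) * b / q₁) *
                  ((2 ^ n : ℂ) * fhat n A α ((a₀ : ℝ) / q₀ + (x.val : ℝ) / q₁))) := by
                rw [sum_eq_fhat]
  rw [main]
  rw [norm_mul, norm_mul, norm_inv, norm_inv, Complex.norm_natCast, habs]
  have habs_le : ‖(∑ a₀ ∈ Finset.range q₀, ∑ x : ZMod q₁,
      ψ x * (Efn ((a₀ : ℝ) * b / q₀ + (x.val : ℝ) * b / q₁) *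
        ((2 ^ n : ℂ) * fhat n A α ((a₀ : ℝ) / q₀ + (x.val : ℝ) / q₁))))‖
      ≤ ∑ a₀ ∈ Finset.range q₀,
          ∑ a₁ ∈ (Finset.Icc 1 q₁).filter (fun a : ℕ => Nat.gcd a q₁ = 1),
            (2 ^ n : ℝ) * ‖(fhat n A α ((a₀ : ℝ) / q₀ + (a₁ : ℝ) / q₁))‖ := by
    refine (norm_sum_le _ _).trans ?_
    refine Finset.sum_le_sum fun a₀ _ => ?_
    refine (norm_sum_le _ _).trans ?_
    have heval : ∀ x : ZMod q₁, ‖(ψ x *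
        (Efn ((a₀ : ℝ) * b / q₀ + (x.val : ℝ) * b / q₁) *
          ((2 ^ n : ℂ) * fhat n A α ((a₀ : ℝ) / q₀ + (x.val : ℝ) / q₁))))‖
        = ‖ψ x‖ *
            ((2 ^ n : ℝ) * ‖(fhat n A α ((a₀ : ℝ) / q₀ + (x.val : ℝ) / q₁))‖) := by
      intro x
      rw [norm_mul, norm_mul, norm_mul, abs_Efn, one_mul]
      congr 2
      rw [norm_pow, Complex.norm_two]
    rw [Finset.sum_congr rfl fun x _ => heval x]
    rw [sum_units_val hq₁ ψ
      (fun v : ℕ => (2 ^ n : ℝ) * ‖(fhat n A α ((a₀ : ℝ) / q₀ + (v : ℝ) / q₁))‖)]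
  calc ((q₀:ℝ))⁻¹ * (Real.sqrt q₁)⁻¹ * ‖(∑ a₀ ∈ Finset.range q₀, ∑ x : ZMod q₁,
      ψ x * (Efn ((a₀ : ℝ) * b / q₀ + (x.val : ℝ) * b / q₁) *
        ((2 ^ n : ℂ) * fhat n A α ((a₀ : ℝ) / q₀ + (x.val : ℝ) / q₁))))‖
      ≤ ((q₀:ℝ))⁻¹ * (Real.sqrt q₁)⁻¹ * ∑ a₀ ∈ Finset.range q₀,
          ∑ a₁ ∈ (Finset.Icc 1 q₁).filter (fun a : ℕ => Nat.gcd a q₁ = 1),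
            (2 ^ n : ℝ) * ‖(fhat n A α ((a₀ : ℝ) / q₀ + (a₁ : ℝ) / q₁))‖ := by
        exact mul_le_mul_of_nonneg_left habs_le (by positivity)
    _ = ((2 ^ n : ℝ) / (q₀ * Real.sqrt q₁)) *
          ∑ a₀ ∈ Finset.range q₀,
            ∑ a₁ ∈ (Finset.Icc 1 q₁).filter (fun a : ℕ => Nat.gcd a q₁ = 1),
              ‖(fhat n A α ((a₀ : ℝ) / q₀ + (a₁ : ℝ) / q₁))‖ := by
        simp only [← Finset.mul_sum]
        rw [← mul_assoc]
        congr 1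
        field_simp
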